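/- Let f : (0, ∞) → (0, ∞) be given by f(x) = (b/2)·exp(−1/x^ℓ) with ℓ ≥ 1 and b = 2(eℓ)^{1/ℓ}, and let β = ℓ^{1/ℓ}. Then f(β) = β, f'(β) = 1, f''(β) < 0, and f restricted to [β, ∞) is a strictly increasing homeomorphism onto [β, b/2) with f(x) < x for all x > β; consequently f^k(x) → β as k → ∞ for every x ∈ [β, ∞), and the inverse branch U : [β, b/2) → [β, ∞) with U(β) = β satisfies U^k(x) → ∞ for every x ∈ (β, b/2). -/

import Mathlib

open Real Filter

theorem stmt18 (ℓ : ℝ) (hℓ : 1 ≤ ℓ) (b β : ℝ)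
    (hb : b = 2 * (Real.exp 1 * ℓ) ^ (1 / ℓ)) (hβ : β = ℓ ^ (1 / ℓ))
    (f : ℝ → ℝ) (hf : f = fun x => b / 2 * Real.exp (-1 / x ^ ℓ)) :
    f β = β ∧ deriv f β = 1 ∧ iteratedDeriv 2 f β < 0 ∧
    StrictMonoOn f (Set.Ici β) ∧ Set.BijOn f (Set.Ici β) (Set.Ico β (b / 2)) ∧
    (∀ x : ℝ, β < x → f x < x) ∧
    (∀ x ∈ Set.Ici β, Tendsto (fun n : ℕ => f^[n] x) atTop (nhds β)) ∧
    ∀ U : ℝ → ℝ, (∀ y ∈ Set.Ico β (b / 2), f (U y) = y ∧ U y ∈ Set.Ici β) →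
      U β = β → ∀ x ∈ Set.Ioo β (b / 2), ∃ n : ℕ, b / 2 ≤ U^[n] x := by
  have hℓ0 : (0:ℝ) < ℓ := lt_of_lt_of_le one_pos hℓ
  have hβ1 : (1:ℝ) ≤ β := hβ ▸ Real.one_le_rpow hℓ (by positivity)
  have hβ0 : (0:ℝ) < β := lt_of_lt_of_le one_pos hβ1
  have hβℓ : β ^ ℓ = ℓ := by
    rw [hβ, ← Real.rpow_mul hℓ0.le, one_div_mul_cancel hℓ0.ne', Real.rpow_one]
  have hC : b / 2 = Real.exp (1/ℓ) * β := by
    rw [hb, hβ, Real.mul_rpow (Real.exp_pos 1).le hℓ0.le, Real.exp_one_rpow]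
    ring
  have hC0 : 0 < b / 2 := by rw [hC]; positivity
  have hβC : β < b / 2 := by
    rw [hC]
    nlinarith [Real.one_lt_exp_iff.mpr (show (0:ℝ) < 1/ℓ by positivity)]
  -- value at β
  have hfβ : f β = β := by
    rw [hf]; simp only []
    rw [hβℓ, hC, neg_div, mul_comm (Real.exp (1/ℓ)) β, mul_assoc, ← Real.exp_add]
    simp
  -- strict monotonicity on Ici β
  have hmono : StrictMonoOn f (Set.Ici β) := by
    intro x hx y hy hxy
    have hx0 : 0 < x := lt_of_lt_of_le hβ0 hx
    have hy0 : 0 < y := lt_of_lt_of_le hβ0 hy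
    rw [hf]
    have h1 : x ^ ℓ < y ^ ℓ := Real.rpow_lt_rpow hx0.le hxy hℓ0
    have hx1 : 0 < x ^ ℓ := Real.rpow_pos_of_pos hx0 ℓ
    have h2 : -1 / x ^ ℓ < -1 / y ^ ℓ := by
      rw [div_lt_div_iff₀ hx1 (lt_trans hx1 h1)]; nlinarith
    exact mul_lt_mul_of_pos_left (Real.exp_lt_exp.mpr h2) hC0
  -- f x < x for x > β
  have hlt : ∀ x : ℝ, β < x → f x < x := by
    intro x hx
    have hx0 : 0 < x := lt_trans hβ0 hx
    have hxl : 0 < x ^ ℓ := Real.rpow_pos_of_pos hx0 ℓ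
    have hℓlt : ℓ < x ^ ℓ := lt_of_le_of_lt hβℓ.symm.le (Real.rpow_lt_rpow hβ0.le hx hℓ0)
    -- key inequality: exp(1/ℓ - 1/x^ℓ) < x / β, i.e. from exp(u) < s with ...
    rw [hf]; simp only []
    rw [hC, neg_div]
    -- f x = β * exp(1/ℓ) * exp(-1/x^ℓ) = β * exp(1/ℓ - 1/x^ℓ)
    have : Real.exp (1/ℓ) * β * Real.exp (-(1 / x ^ ℓ)) = β * Real.exp (1/ℓ - 1/x^ℓ) := by
      rw [mul_comm (Real.exp (1/ℓ)) β, mul_assoc, ← Real.exp_add]; ring_nf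
    rw [this]
    -- Show β * exp(1/ℓ - 1/x^ℓ) < x.  Let s = x^ℓ/ℓ > 1. Then
    -- exp(1 - ℓ/x^ℓ) < x^ℓ/ℓ  (from exp(u) > 1+u with u = ℓ/x^ℓ - 1 ≠ 0)
    have hs1 : (1:ℝ) < x ^ ℓ / ℓ := (one_lt_div hℓ0).mpr hℓlt
    have hu : ℓ / x ^ ℓ - 1 ≠ 0 := by
      have : ℓ / x ^ ℓ < 1 := (div_lt_one hxl).mpr hℓlt
      linarith
    have h4 : 0 < ℓ / x ^ ℓ := by positivity
    have hkey : Real.exp (1 - ℓ / x ^ ℓ) < x ^ ℓ / ℓ := by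
      have h1 := Real.add_one_lt_exp hu
      have hE : ℓ / x ^ ℓ < Real.exp (ℓ / x ^ ℓ - 1) := by linarith
      have h5 : Real.exp (1 - ℓ / x ^ ℓ) = (Real.exp (ℓ / x ^ ℓ - 1))⁻¹ := by
        rw [← Real.exp_neg]; ring_nf
      rw [h5, ← inv_div ℓ (x ^ ℓ)]
      exact inv_strictAnti₀ h4 hE
    -- raise to power 1/ℓ : β * exp(1/ℓ - 1/x^ℓ) = (ℓ * exp(1 - ℓ/x^ℓ))^(1/ℓ) < (x^ℓ)^(1/ℓ) = x
    have hrw : β * Real.exp (1/ℓ - 1/x^ℓ) = (ℓ * Real.exp (1 - ℓ / x ^ ℓ)) ^ (1/ℓ) := by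
      rw [Real.mul_rpow hℓ0.le (Real.exp_pos _).le, ← hβ,
        Real.rpow_def_of_pos (Real.exp_pos _), Real.log_exp]
      congr 1
      field_simp
    rw [hrw]
    calc (ℓ * Real.exp (1 - ℓ / x ^ ℓ)) ^ (1/ℓ)
        < (x ^ ℓ) ^ (1/ℓ) := by
          apply Real.rpow_lt_rpow (by positivity) _ (by positivity)
          rw [lt_div_iff₀ hℓ0] at hkey; linarith [hkey]
      _ = x := by
          rw [← Real.rpow_mul hx0.le, mul_one_div_cancel hℓ0.ne', Real.rpow_one]
  -- derivative formula
  have hderiv : ∀ x : ℝ, 0 < x → HasDerivAt f (f x * (ℓ * x ^ (-(ℓ+1)))) x := by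
    intro x hx0
    have hxl : 0 < x ^ ℓ := Real.rpow_pos_of_pos hx0 ℓ
    have h1 : HasDerivAt (fun y : ℝ => y ^ ℓ) (ℓ * x ^ (ℓ-1)) x :=
      Real.hasDerivAt_rpow_const (Or.inl hx0.ne')
    have h2 : HasDerivAt (fun y : ℝ => -1 / y ^ ℓ) (ℓ * x ^ (ℓ-1) / (x ^ ℓ) ^ 2) x := by
      have h2a := (h1.inv hxl.ne').neg
      simp only [neg_div, one_div, neg_neg] at h2a ⊢
      exact h2a
    have h3 := ((h2.exp).const_mul (b/2))
    convert h3 using 1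
    · rfl
    · rfl
    rw [hf]; simp only []
    have hx1 : x ^ (ℓ-1) = x ^ (-(ℓ+1)) * (x ^ ℓ * x ^ ℓ) := by
      rw [← Real.rpow_add hx0, ← Real.rpow_add hx0]; ring_nf
    rw [sq, hx1]
    field_simp
  have hDβ : f β * (ℓ * β ^ (-(ℓ+1))) = 1 := by
    rw [hfβ]
    calc β * (ℓ * β ^ (-(ℓ+1))) = ℓ * (β ^ (1:ℝ) * β ^ (-(ℓ+1))) := by
          rw [Real.rpow_one]; ring
      _ = ℓ * β ^ (1 + -(ℓ+1)) := by rw [← Real.rpow_add hβ0]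
      _ = ℓ * (β ^ ℓ)⁻¹ := by
          rw [show (1 + -(ℓ+1)) = -ℓ by ring, Real.rpow_neg hβ0.le]
      _ = 1 := by rw [hβℓ]; field_simp
  have hd1 : deriv f β = 1 := by rw [(hderiv β hβ0).deriv, hDβ]
  -- second derivative
  have hd2 : iteratedDeriv 2 f β < 0 := by
    set g : ℝ → ℝ := fun x => f x * (ℓ * x ^ (-(ℓ+1))) with hg
    have hfg : deriv f =ᶠ[nhds β] g := by
      filter_upwards [IsOpen.mem_nhds isOpen_Ioi hβ0] with x hx
      exact (hderiv x hx).deriv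
    have h2 : iteratedDeriv 2 f β = deriv g β := by
      rw [show (2:ℕ) = 1 + 1 from rfl, iteratedDeriv_succ, iteratedDeriv_one]
      exact hfg.deriv_eq
    have hpow : HasDerivAt (fun x : ℝ => ℓ * x ^ (-(ℓ+1))) (ℓ * (-(ℓ+1) * β ^ (-(ℓ+1)-1))) β :=
      (Real.hasDerivAt_rpow_const (Or.inl hβ0.ne')).const_mul ℓ
    have hgd : HasDerivAt g
        (f β * (ℓ * β ^ (-(ℓ+1))) * (ℓ * β ^ (-(ℓ+1))) + f β * (ℓ * (-(ℓ+1) * β ^ (-(ℓ+1)-1)))) β :=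
      (hderiv β hβ0).mul hpow
    rw [h2, hgd.deriv, hDβ, hfβ]
    have hββ : β * β ^ (-(ℓ+1)-1) = β ^ (-(ℓ+1)) := by
      calc β * β ^ (-(ℓ+1)-1) = β ^ (1:ℝ) * β ^ (-(ℓ+1)-1) := by rw [Real.rpow_one]
        _ = β ^ (1 + (-(ℓ+1)-1)) := by rw [← Real.rpow_add hβ0]
        _ = β ^ (-(ℓ+1)) := by ring_nf
    have hβp : 0 < β ^ (-(ℓ+1)) := Real.rpow_pos_of_pos hβ0 _
    have : 1 * (ℓ * β ^ (-(ℓ+1))) + β * (ℓ * (-(ℓ+1) * β ^ (-(ℓ+1)-1)))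
        = -(ℓ^2) * β ^ (-(ℓ+1)) := by
      rw [show β * (ℓ * (-(ℓ+1) * β ^ (-(ℓ+1)-1))) = ℓ * (-(ℓ+1)) * (β * β ^ (-(ℓ+1)-1)) by ring,
        hββ]
      ring
    rw [this]
    nlinarith
  have hcont : ∀ x : ℝ, 0 < x → ContinuousAt f x := fun x hx => (hderiv x hx).continuousAt
  have hfle : ∀ z : ℝ, β ≤ z → f z ≤ z := fun z hz =>
    (eq_or_lt_of_le hz).elim (fun h => h ▸ hfβ.le) (fun h => (hlt z h).le)
  have hmaps : ∀ x ∈ Set.Ici β, f x ∈ Set.Ico β (b/2) := by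
    intro x hx
    have hx0 : 0 < x := lt_of_lt_of_le hβ0 hx
    constructor
    · rcases eq_or_lt_of_le (Set.mem_Ici.mp hx) with h | h
      · rw [← h, hfβ]
      · rw [← hfβ]; exact (hmono (Set.mem_Ici.mpr le_rfl) hx h).le
    · rw [hf]; simp only []
      have : Real.exp (-1 / x ^ ℓ) < 1 := by
        rw [Real.exp_lt_one_iff]
        have : 0 < x ^ ℓ := Real.rpow_pos_of_pos hx0 ℓ
        rw [neg_div, neg_lt_zero]; exact div_pos one_pos this
      nlinarith
  -- tendsto at top
  have htop : Tendsto f atTop (nhds (b/2)) := by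
    have h1 : Tendsto (fun x : ℝ => x ^ ℓ) atTop atTop := tendsto_rpow_atTop hℓ0
    have h2 : Tendsto (fun x : ℝ => -1 / x ^ ℓ) atTop (nhds 0) := by
      have := tendsto_inv_atTop_zero.comp h1
      have h3 := this.neg
      simp only [neg_zero] at h3
      convert h3 using 2 with x
      simp [neg_div]
    have h4 := (Real.continuous_exp.continuousAt (x := 0)).tendsto.comp h2
    rw [Real.exp_zero] at h4
    rw [hf]
    have h5 := h4.const_mul (b/2)
    simpa using h5
  have hbij : Set.BijOn f (Set.Ici β) (Set.Ico β (b/2)) := by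
    refine ⟨hmaps, hmono.injOn, ?_⟩
    intro y hy
    obtain ⟨M, hyM, hβM⟩ := ((htop.eventually (eventually_gt_nhds hy.2)).and
      (eventually_ge_atTop β)).exists
    have hconOn : ContinuousOn f (Set.Icc β M) := fun z hz =>
      (hcont z (lt_of_lt_of_le hβ0 hz.1)).continuousWithinAt
    have := intermediate_value_Icc hβM hconOn
    have hyIcc : y ∈ Set.Icc (f β) (f M) := ⟨by rw [hfβ]; exact hy.1, hyM.le⟩
    obtain ⟨x, hx, hfx⟩ := this hyIcc
    exact ⟨x, hx.1, hfx⟩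
  -- iterates converge to β
  have hiter : ∀ x ∈ Set.Ici β, Tendsto (fun n : ℕ => f^[n] x) atTop (nhds β) := by
    intro x hx
    have hmem : ∀ n : ℕ, β ≤ f^[n] x := by
      intro n; induction n with
      | zero => exact hx
      | succ n ih => rw [Function.iterate_succ_apply']; exact (hmaps _ ih).1
    have hanti : Antitone (fun n : ℕ => f^[n] x) := by
      apply antitone_nat_of_succ_le
      intro n
      rw [Function.iterate_succ_apply']
      exact hfle _ (hmem n)
    have hbdd : BddBelow (Set.range (fun n : ℕ => f^[n] x)) :=
      ⟨β, by rintro _ ⟨n, rfl⟩; exact hmem n⟩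
    have hT := tendsto_atTop_ciInf hanti hbdd
    set L := ⨅ n, f^[n] x with hL
    have hβL : β ≤ L := le_ciInf hmem
    have hL0 : 0 < L := lt_of_lt_of_le hβ0 hβL
    have h1 : Tendsto (fun n : ℕ => f^[n+1] x) atTop (nhds L) :=
      hT.comp (tendsto_add_atTop_nat 1)
    have h2 : Tendsto (fun n : ℕ => f (f^[n] x)) atTop (nhds (f L)) :=
      ((hcont L hL0).tendsto).comp hT
    have h3 : (fun n : ℕ => f (f^[n] x)) = fun n : ℕ => f^[n+1] x := by
      funext n; rw [Function.iterate_succ_apply']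
    rw [h3] at h2
    have hfL : f L = L := tendsto_nhds_unique h2 h1
    have hLβ : L = β := by
      rcases eq_or_lt_of_le hβL with h | h
      · exact h.symm
      · exact absurd hfL (ne_of_lt (hlt L h))
    rwa [hLβ] at hT
  refine ⟨hfβ, hd1, hd2, hmono, hbij, hlt, hiter, ?_⟩
  intro U hU hUβ x hxmem
  by_contra hcon
  push_neg at hcon
  set u : ℕ → ℝ := fun n => U^[n] x with hu
  have hmem : ∀ n : ℕ, u n ∈ Set.Ioo β (b/2) := by
    intro n; induction n with
    | zero => exact hxmem
    | succ n ih =>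
      have hIco : u n ∈ Set.Ico β (b/2) := ⟨ih.1.le, ih.2⟩
      obtain ⟨hfU, hUmem⟩ := hU (u n) hIco
      have hun1 : u (n+1) = U (u n) := Function.iterate_succ_apply' U n x
      refine ⟨?_, ?_⟩
      · rcases eq_or_lt_of_le (Set.mem_Ici.mp hUmem) with h | h
        · exfalso; rw [← h, hfβ] at hfU; exact (ne_of_gt ih.1) hfU.symm
        · rw [hun1]; exact h
      · exact hcon (n+1)
  have hsm : ∀ n : ℕ, u n < u (n+1) := by
    intro n
    have hIco : u n ∈ Set.Ico β (b/2) := ⟨(hmem n).1.le, (hmem n).2⟩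
    obtain ⟨hfU, hUmem⟩ := hU (u n) hIco
    have hun1 : u (n+1) = U (u n) := Function.iterate_succ_apply' U n x
    have h := hlt (u (n+1)) (hmem (n+1)).1
    rw [hun1, hfU, ← hun1] at h
    exact h
  have hmono' : Monotone u := monotone_nat_of_le_succ (fun n => (hsm n).le)
  have hbdd : BddAbove (Set.range u) := ⟨b/2, by rintro _ ⟨n, rfl⟩; exact (hmem n).2.le⟩
  have hT := tendsto_atTop_ciSup hmono' hbdd
  set L := ⨆ n, u n with hLdef
  have hLu : ∀ n, u n ≤ L := fun n => le_ciSup hbdd n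
  have hβL : β < L := lt_of_lt_of_le (hmem 0).1 (hLu 0)
  have hL0 : 0 < L := lt_trans hβ0 hβL
  have h1 : Tendsto (fun n : ℕ => u (n+1)) atTop (nhds L) := hT.comp (tendsto_add_atTop_nat 1)
  have h2 : Tendsto (fun n : ℕ => f (u (n+1))) atTop (nhds (f L)) :=
    (hcont L hL0).tendsto.comp h1
  have h3 : (fun n : ℕ => f (u (n+1))) = fun n : ℕ => u n := by
    funext n
    have hIco : u n ∈ Set.Ico β (b/2) := ⟨(hmem n).1.le, (hmem n).2⟩
    rw [show u (n+1) = U (u n) from Function.iterate_succ_apply' U n x, (hU (u n) hIco).1]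
  rw [h3] at h2
  exact absurd (tendsto_nhds_unique h2 hT) (ne_of_lt (hlt L hβL))
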